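/- For every t ≥ 0 and every node k ∈ {1,…,n}, the (k,k) entry of ∫₀ᵗ e^{−Ls}(Iₙ − (1/n)𝟙𝟙ᵀ)e^{−Ls} ds equals Σ_{p=2}^n ((1 − e^{−2λ_p t})/(2λ_p))·(u_k⁽ᵖ⁾)². (This is the variance of the error ε_k(t) at node k in the coupled drift-diffusion model.) -/

import Mathlib

open Finset Matrix

/-- **Variance of the error at node `k` in the coupled DDM.**
For every `t ≥ 0` and node `k`, the `(k,k)` entry of
`∫₀ᵗ e^{−Ls}(Iₙ − (1/n)𝟙𝟙ᵀ)e^{−Ls} ds` equals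
`Σ_{p≠1} ((1 − e^{−2λ_p t})/(2λ_p))·(u_k⁽ᵖ⁾)²`. -/
theorem coupledDDM_error_variance
    (n : ℕ) [NeZero n] (hn : 2 ≤ n)
    (L : Matrix (Fin n) (Fin n) ℝ)
    (hsymm : L.IsSymm) (hpsd : L.PosSemidef)
    (hL1 : L *ᵥ (fun _ => (1 : ℝ)) = 0)
    (hker : ∀ v : Fin n → ℝ, L *ᵥ v = 0 → ∃ c : ℝ, v = fun _ => c)
    (lam : Fin n → ℝ) (u : Fin n → Fin n → ℝ)
    (hlam0 : lam 0 = 0)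
    (hlampos : ∀ p : Fin n, p ≠ 0 → 0 < lam p)
    (hmono : Monotone lam)
    (heig : ∀ p : Fin n, L *ᵥ u p = lam p • u p)
    (horth : ∀ p q : Fin n, ∑ k, u p k * u q k = if p = q then (1 : ℝ) else 0)
    (hu0 : u 0 = fun _ => 1 / Real.sqrt n)
    (t : ℝ) (ht : 0 ≤ t) (k : Fin n) :
    ∫ s in (0:ℝ)..t,
        (((NormedSpace.exp ((-s) • L)) *
          ((1 : Matrix (Fin n) (Fin n) ℝ) - Matrix.of fun _ _ => (1 : ℝ) / n) *
          (NormedSpace.exp ((-s) • L)) : Matrix (Fin n) (Fin n) ℝ)) k k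
      = ∑ p ∈ Finset.univ.erase (0 : Fin n),
          (1 - Real.exp (-2 * lam p * t)) / (2 * lam p) * (u p k) ^ 2 := by
  set U : Matrix (Fin n) (Fin n) ℝ := Matrix.of fun i p => u p i with hUdef
  have hUtU : Uᵀ * U = 1 := by
    ext p q
    simp [Matrix.mul_apply, hUdef, horth p q, Matrix.one_apply]
  have hUUt : U * Uᵀ = 1 := mul_eq_one_comm.mpr hUtU
  have hUinv : U⁻¹ = Uᵀ := Matrix.inv_eq_right_inv hUUt
  have hUunit : IsUnit U := Matrix.isUnit_iff_isUnit_det U |>.mpr (by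
    have := Matrix.det_mul U Uᵀ
    rw [hUUt, Matrix.det_one] at this
    exact IsUnit.of_mul_eq_one _ this.symm)
  -- L = U * D * Uᵀ
  have hLU : L * U = U * Matrix.diagonal lam := by
    ext i p
    have := congrFun (heig p) i
    simpa [Matrix.mul_apply, hUdef, Matrix.diagonal, Matrix.mulVec, dotProduct,
      mul_comm] using this
  have hL : L = U * Matrix.diagonal lam * Uᵀ := by
    calc L = L * (U * Uᵀ) := by rw [hUUt, Matrix.mul_one]
    _ = (L * U) * Uᵀ := by rw [Matrix.mul_assoc]
    _ = U * Matrix.diagonal lam * Uᵀ := by rw [hLU]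
  -- exponential
  have hexp : ∀ s : ℝ, NormedSpace.exp ((-s) • L)
      = U * Matrix.diagonal (fun p => Real.exp (-s * lam p)) * Uᵀ := by
    intro s
    have hdiag : (-s) • Matrix.diagonal lam = Matrix.diagonal (fun p => -s * lam p) := by
      rw [← Matrix.diagonal_smul]
      congr 1
    have h1 : (-s) • L = U * Matrix.diagonal (fun p => -s * lam p) * U⁻¹ := by
      rw [hL, hUinv, ← smul_mul_assoc, ← mul_smul_comm, hdiag]
    rw [h1, Matrix.exp_conj U _ hUunit, Matrix.exp_diagonal, hUinv]
    congr 2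
    rw [Pi.exp_def]
    funext p
    rw [← Real.exp_eq_exp_ℝ]
  -- projector
  have hsq : Real.sqrt n * Real.sqrt n = n := Real.mul_self_sqrt (Nat.cast_nonneg n)
  set E : Matrix (Fin n) (Fin n) ℝ :=
    Matrix.diagonal (fun p : Fin n => if p = 0 then (0:ℝ) else 1) with hEdef
  have hP : (1 : Matrix (Fin n) (Fin n) ℝ) - Matrix.of (fun _ _ => (1 : ℝ) / n)
      = U * E * Uᵀ := by
    ext i j
    have hsum : ∑ p, u p i * u p j = (1 : Matrix (Fin n) (Fin n) ℝ) i j := by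
      have := congrFun (congrFun hUUt i) j
      simpa [Matrix.mul_apply, hUdef] using this
    have hrhs : (U * E * Uᵀ) i j
        = ∑ p, (if p = 0 then (0:ℝ) else 1) * (u p i * u p j) := by
      simp [Matrix.mul_apply, hEdef, Matrix.diagonal, hUdef, Finset.sum_mul, mul_comm,
        mul_assoc, mul_left_comm]
    have hterm : ∀ p : Fin n, (if p = 0 then (0:ℝ) else 1) * (u p i * u p j)
        = u p i * u p j - (if p = 0 then u 0 i * u 0 j else 0) := by
      intro p; by_cases h : p = 0 <;> simp [h]
    rw [hrhs]
    rw [Finset.sum_congr rfl fun p _ => hterm p, Finset.sum_sub_distrib,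
      Finset.sum_ite_eq' Finset.univ (0 : Fin n) (fun _ => u 0 i * u 0 j), hsum, hu0]
    have hnpos : (0:ℝ) < n := by positivity
    have : ((n:ℝ))⁻¹ = (Real.sqrt n)⁻¹ * (Real.sqrt n)⁻¹ := by
      rw [← mul_inv, hsq]
    simp [Matrix.sub_apply, this]
  -- the integrand entrywise
  have cancel : ∀ X : Matrix (Fin n) (Fin n) ℝ, Uᵀ * (U * X) = X := by
    intro X; rw [← Matrix.mul_assoc, hUtU, Matrix.one_mul]
  have hmat : ∀ s : ℝ,
      (((NormedSpace.exp ((-s) • L)) *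
        ((1 : Matrix (Fin n) (Fin n) ℝ) - Matrix.of fun _ _ => (1 : ℝ) / n) *
        (NormedSpace.exp ((-s) • L)) : Matrix (Fin n) (Fin n) ℝ)) k k
      = ∑ p ∈ Finset.univ.erase (0 : Fin n), Real.exp (-2 * lam p * s) * (u p k) ^ 2 := by
    intro s
    rw [hexp, hP]
    have hdd : Matrix.diagonal (fun p => Real.exp (-s * lam p)) * E *
        Matrix.diagonal (fun p => Real.exp (-s * lam p))
        = Matrix.diagonal (fun p => if p = 0 then (0:ℝ) else Real.exp (-2 * lam p * s)) := by
      rw [hEdef, Matrix.diagonal_mul_diagonal, Matrix.diagonal_mul_diagonal]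
      refine congrArg Matrix.diagonal ?_
      funext p
      by_cases h : p = 0
      · simp [h]
      · simp only [Pi.mul_apply, h, ite_false, mul_one, mul_ite, mul_zero, ite_mul, zero_mul,
          if_neg h]
        rw [← Real.exp_add]
        congr 1
        ring
    have hstep : Matrix.diagonal (fun p => Real.exp (-s * lam p)) * (E *
        (Matrix.diagonal (fun p => Real.exp (-s * lam p)) * Uᵀ))
        = Matrix.diagonal (fun p => if p = 0 then (0:ℝ) else Real.exp (-2 * lam p * s)) * Uᵀ := by
      rw [← Matrix.mul_assoc, ← Matrix.mul_assoc, hdd]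
    have hprod : (U * Matrix.diagonal (fun p => Real.exp (-s * lam p)) * Uᵀ) * (U * E * Uᵀ) *
        (U * Matrix.diagonal (fun p => Real.exp (-s * lam p)) * Uᵀ)
        = U * Matrix.diagonal (fun p => if p = 0 then (0:ℝ) else Real.exp (-2 * lam p * s)) * Uᵀ := by
      simp only [Matrix.mul_assoc, cancel]
      rw [hstep]
    rw [hprod]
    have hentry : (U * Matrix.diagonal
        (fun p => if p = 0 then (0:ℝ) else Real.exp (-2 * lam p * s)) * Uᵀ) k k
        = ∑ p, (if p = 0 then (0:ℝ) else Real.exp (-2 * lam p * s)) * (u p k) ^ 2 := by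
      simp [Matrix.mul_apply, Matrix.diagonal, hUdef, Finset.sum_mul, mul_comm, mul_assoc,
        mul_left_comm, sq, ite_mul, zero_mul]
    have herase := Finset.sum_erase (f := fun p : Fin n =>
      (if p = 0 then (0:ℝ) else Real.exp (-2 * lam p * s)) * (u p k) ^ 2)
      Finset.univ (a := 0) (by simp)
    rw [hentry, ← herase]
    exact Finset.sum_congr rfl fun p hp => by simp [(Finset.mem_erase.mp hp).1]
  rw [intervalIntegral.integral_congr (g := fun s =>
    ∑ p ∈ Finset.univ.erase (0 : Fin n), Real.exp (-2 * lam p * s) * (u p k) ^ 2)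
    (fun s _ => hmat s)]
  rw [intervalIntegral.integral_finset_sum (fun p _ =>
    ((show Continuous fun s : ℝ => Real.exp (-2 * lam p * s) * (u p k) ^ 2 by
      fun_prop).intervalIntegrable 0 t))]
  refine Finset.sum_congr rfl fun p hp => ?_
  have hlp : 0 < lam p := hlampos p (Finset.mem_erase.mp hp).1
  have hc : (-2 * lam p) ≠ 0 := by nlinarith
  rw [intervalIntegral.integral_mul_const]
  congr 1
  have : ∀ s : ℝ, Real.exp (-2 * lam p * s) = Real.exp ((-2 * lam p) * s) := fun s => rfl
  rw [intervalIntegral.integral_comp_mul_left Real.exp hc, mul_zero, integral_exp,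
    Real.exp_zero, smul_eq_mul]
  field_simp
  ring
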